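/- Let n ≥ 1 and q = (n+1)(n+2)/2. Let Â ∈ ℝ^{(2n+1)×q} be the matrix whose 2n+1 rows are φ̂(u)ᵀ for u ranging over the fallback points {0, e₁, …, eₙ, −e₁, …, −eₙ} ⊂ ℝⁿ. Then for every symmetric positive definite W ∈ ℝ^{q×q} with W ⪯ w_max I (w_max > 0), the matrix M := Â W⁻¹ Âᵀ satisfies λ_min(M) ≥ 1/(w_max (4n+3)). -/

import Mathlib

open Matrix

/-- Index set `{0, +1, …, +n, −1, …, −n}` for the fallback points. -/
abbrev Idx (n : ℕ) := Unit ⊕ Fin n ⊕ Fin n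

/-- Index type for the entries of `vech` of a symmetric `n × n` matrix: pairs `i ≤ j`. -/
abbrev VIdx (n : ℕ) := {p : Fin n × Fin n // p.1 ≤ p.2}

/-- Index type for quadratic coefficient vectors: constant, gradient and Hessian blocks;
its cardinality is `q = (n+1)(n+2)/2`. -/
abbrev QIdx (n : ℕ) := Unit ⊕ Fin n ⊕ VIdx n

/-- The scaled quadratic feature vector `φ̂(u) = (1, u, qvec u)`, where `qvec u` has the
entries `uᵢ²/2` on the diagonal positions and `uᵢ uⱼ` (`i < j`) on the off-diagonal
positions, consistently with the half-vectorization `vech`. -/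
noncomputable def phiHat {n : ℕ} (u : Fin n → ℝ) : QIdx n → ℝ
  | Sum.inl _ => 1
  | Sum.inr (Sum.inl i) => u i
  | Sum.inr (Sum.inr p) =>
      if p.val.1 = p.val.2 then u p.val.1 ^ 2 / 2 else u p.val.1 * u p.val.2

/-- The fallback points `0, e₁, …, eₙ, −e₁, …, −eₙ`. -/
noncomputable def fallbackPoint (n : ℕ) : Idx n → Fin n → ℝ
  | Sum.inl _ => 0
  | Sum.inr (Sum.inl i) => fun j => if j = i then 1 else 0
  | Sum.inr (Sum.inr i) => fun j => if j = i then -1 else 0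

/-- The fallback design matrix, whose rows are `φ̂(u)ᵀ` for the fallback points `u`. -/
noncomputable def fallbackA (n : ℕ) : Matrix (Idx n) (QIdx n) ℝ :=
  Matrix.of fun a => phiHat (fallbackPoint n a)

/-- The smallest eigenvalue of a (Hermitian) real matrix. -/
noncomputable def lambdaMin {ι : Type*} [Fintype ι] [DecidableEq ι] [Nonempty ι]
    (M : Matrix ι ι ℝ) : ℝ :=
  if h : M.IsHermitian then ⨅ i, h.eigenvalues i else 0

/-- Each eigenvalue of a real symmetric matrix is bounded below by any constant `c`
such that `c * ‖x‖² ≤ xᵀ M x` for all `x`. -/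
lemma lambdaMinAux {ι : Type*} [Fintype ι] [DecidableEq ι] [Nonempty ι]
    {M : Matrix ι ι ℝ} (hM : M.IsHermitian) {c : ℝ}
    (h : ∀ x : ι → ℝ, c * (x ⬝ᵥ x) ≤ x ⬝ᵥ (M *ᵥ x)) (i : ι) :
    c ≤ hM.eigenvalues i := by
  have hv := hM.eigenvalues_eq i
  set v : ι → ℝ := ⇑(hM.eigenvectorBasis i) with hvdef
  have hstar : star v = v := by simp [hvdef]
  have hnorm : v ⬝ᵥ v = 1 := by
    have h1 : (inner (𝕜 := ℝ) (hM.eigenvectorBasis i) (hM.eigenvectorBasis i)) = (1:ℝ) := by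
      rw [real_inner_self_eq_norm_sq, hM.eigenvectorBasis.orthonormal.1 i]; norm_num
    rw [EuclideanSpace.inner_eq_star_dotProduct] at h1
    simpa using h1
  have h2 := h v
  rw [hnorm, mul_one] at h2
  rw [hv, hstar]
  simpa using h2

open scoped MatrixOrder in
/-- If `W` is positive definite with `W ⪯ wmax·I`, then `yᵀ W⁻¹ y ≥ ‖y‖²/wmax`. -/
lemma invQuadAux {m : Type*} [Fintype m] [DecidableEq m] {W : Matrix m m ℝ} {wmax : ℝ}
    (hW : W.PosDef)
    (hup : (wmax • (1 : Matrix m m ℝ) - W).PosSemidef) (y : m → ℝ) :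
    y ⬝ᵥ y ≤ wmax * (y ⬝ᵥ (W⁻¹ *ᵥ y)) := by
  have hWinv : W⁻¹.PosDef := hW.inv
  set S := CFC.sqrt W⁻¹ with hSdef
  have hS : S.PosSemidef := (CFC.sqrt_nonneg W⁻¹).posSemidef
  have hSS : S * S = W⁻¹ := CFC.sqrt_mul_sqrt_self W⁻¹ hWinv.posSemidef.nonneg
  have hSH : Sᴴ = S := hS.1
  have hdetW : IsUnit W.det := isUnit_iff_ne_zero.mpr hW.det_pos.ne'
  have hdetS : IsUnit S.det := by
    have : IsUnit (S * S).det := by rw [hSS]; exact isUnit_iff_ne_zero.mpr hWinv.det_pos.ne'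
    rw [det_mul] at this
    exact (IsUnit.mul_iff.mp this).1
  have h1 : S * W * S * S = S := by
    rw [mul_assoc (S * W) S S, hSS, mul_assoc, mul_nonsing_inv _ hdetW, mul_one]
  have hkey : S * W * S = 1 := by
    calc S * W * S = S * W * S * (S * S⁻¹) := by rw [mul_nonsing_inv _ hdetS, mul_one]
    _ = (S * W * S * S) * S⁻¹ := by simp only [mul_assoc]
    _ = S * S⁻¹ := by rw [h1]
    _ = 1 := mul_nonsing_inv _ hdetS
  have hconj : (S * (wmax • (1 : Matrix m m ℝ) - W) * Sᴴ).PosSemidef :=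
    hup.mul_mul_conjTranspose_same S
  rw [hSH] at hconj
  have hexp : S * (wmax • (1 : Matrix m m ℝ) - W) * S = wmax • W⁻¹ - 1 := by
    rw [mul_sub, sub_mul, Matrix.mul_smul, Matrix.smul_mul, mul_one, hSS, hkey]
  rw [hexp] at hconj
  have h2 := hconj.dotProduct_mulVec_nonneg y
  have hstar : star y = y := by simp
  rw [hstar, sub_mulVec, smul_mulVec, one_mulVec, dotProduct_sub, dotProduct_smul] at h2
  simp only [smul_eq_mul] at h2
  linarith

set_option maxHeartbeats 1000000 in
/-- The key quadratic-form lower bound for the fallback design matrix: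
`xᵀ (Â Âᵀ) x ≥ ‖x‖²/(4n+3)`. -/
lemma fallbackQuadAux (n : ℕ) (hn : 1 ≤ n) (x : Idx n → ℝ) :
    x ⬝ᵥ x ≤ (4*(n:ℝ)+3) * (((fallbackA n)ᵀ *ᵥ x) ⬝ᵥ ((fallbackA n)ᵀ *ᵥ x)) := by
  set a : Fin n → ℝ := fun i => x (Sum.inr (Sum.inl i)) with ha
  set b : Fin n → ℝ := fun i => x (Sum.inr (Sum.inr i)) with hb
  set t : ℝ := x (Sum.inl ()) with ht
  set y : QIdx n → ℝ := (fallbackA n)ᵀ *ᵥ x with hy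
  have hterm : ∀ j : QIdx n, y j = ∑ c : Idx n, phiHat (fallbackPoint n c) j * x c :=
    fun j => rfl
  have h0 : y (Sum.inl ()) = t + ((∑ i, a i) + ∑ i, b i) := by
    simp [hy, Matrix.mulVec, dotProduct, fallbackA, phiHat,
      Fintype.sum_sum_type, ha, hb, ht]
  have h1 : ∀ i, y (Sum.inr (Sum.inl i)) = a i - b i := by
    intro i
    rw [hterm]; simp only [Fintype.sum_sum_type]
    have p0 : phiHat (fallbackPoint n (Sum.inl ())) (Sum.inr (Sum.inl i)) * x (Sum.inl ()) = 0 := by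
      simp [phiHat, fallbackPoint]
    have pp : ∀ m, phiHat (fallbackPoint n (Sum.inr (Sum.inl m))) (Sum.inr (Sum.inl i))
        * x (Sum.inr (Sum.inl m)) = if i = m then a m else 0 := by
      intro m; by_cases h : i = m <;> simp [phiHat, fallbackPoint, h, ha]
    have pm : ∀ m, phiHat (fallbackPoint n (Sum.inr (Sum.inr m))) (Sum.inr (Sum.inl i))
        * x (Sum.inr (Sum.inr m)) = if i = m then -(b m) else 0 := by
      intro m; by_cases h : i = m <;> simp [phiHat, fallbackPoint, h, hb]
    rw [Finset.sum_congr rfl (fun m _ => pp m), Finset.sum_congr rfl (fun m _ => pm m),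
      Finset.sum_ite_eq, Finset.sum_ite_eq]
    simp [p0]
    ring
  have h2 : ∀ i : Fin n, y (Sum.inr (Sum.inr ⟨(i,i), le_rfl⟩)) = (a i + b i)/2 := by
    intro i
    rw [hterm]; simp only [Fintype.sum_sum_type]
    have p0 : phiHat (fallbackPoint n (Sum.inl ())) (Sum.inr (Sum.inr ⟨(i,i), le_rfl⟩))
        * x (Sum.inl ()) = 0 := by
      simp [phiHat, fallbackPoint]
    have pp : ∀ m, phiHat (fallbackPoint n (Sum.inr (Sum.inl m))) (Sum.inr (Sum.inr ⟨(i,i), le_rfl⟩))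
        * x (Sum.inr (Sum.inl m)) = if i = m then a m / 2 else 0 := by
      intro m; by_cases h : i = m
      · simp [phiHat, fallbackPoint, h, ha]; ring
      · simp [phiHat, fallbackPoint, h, ha]
    have pm : ∀ m, phiHat (fallbackPoint n (Sum.inr (Sum.inr m))) (Sum.inr (Sum.inr ⟨(i,i), le_rfl⟩))
        * x (Sum.inr (Sum.inr m)) = if i = m then b m / 2 else 0 := by
      intro m; by_cases h : i = m
      · simp [phiHat, fallbackPoint, h, hb]; ring
      · simp [phiHat, fallbackPoint, h, hb]
    rw [Finset.sum_congr rfl (fun m _ => pp m), Finset.sum_congr rfl (fun m _ => pm m),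
      Finset.sum_ite_eq, Finset.sum_ite_eq]
    simp [p0]
    ring
  -- dot product expansions
  have hxx : x ⬝ᵥ x = t^2 + ((∑ i, (a i)^2) + ∑ i, (b i)^2) := by
    simp [dotProduct, Fintype.sum_sum_type, ← pow_two]
    rfl
  have hyy : y ⬝ᵥ y = y (Sum.inl ()) * y (Sum.inl ()) +
      ((∑ i, y (Sum.inr (Sum.inl i)) * y (Sum.inr (Sum.inl i))) +
        ∑ p : VIdx n, y (Sum.inr (Sum.inr p)) * y (Sum.inr (Sum.inr p))) := by
    simp [dotProduct, Fintype.sum_sum_type]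
  set C := ∑ i, (a i + b i) with hC
  set P := ∑ i, (a i + b i)^2 with hPdef
  set D := ∑ i, (a i - b i)^2 with hDdef
  set N := (n:ℝ) with hNdef
  have hN1 : (1:ℝ) ≤ N := by rw [hNdef]; exact_mod_cast hn
  have hN0 : (0:ℝ) < N := by linarith
  have hP : 0 ≤ P := Finset.sum_nonneg fun i _ => sq_nonneg _
  have hD : 0 ≤ D := Finset.sum_nonneg fun i _ => sq_nonneg _
  have hCS : C^2 ≤ N * P := by
    have h := sq_sum_le_card_mul_sum_sq
      (s := (Finset.univ : Finset (Fin n))) (f := fun i => a i + b i)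
    simpa [hC, hPdef, hNdef] using h
  have hPD : P + D = 2*(∑ i, (a i)^2) + 2*(∑ i, (b i)^2) := by
    rw [Finset.mul_sum, Finset.mul_sum, ← Finset.sum_add_distrib, ← Finset.sum_add_distrib]
    exact Finset.sum_congr rfl fun i _ => by ring
  have hCsum : C = (∑ i, a i) + ∑ i, b i := Finset.sum_add_distrib
  -- lower bound on y ⬝ᵥ y
  have hdiag : ∑ i, ((a i + b i)/2)^2 ≤
      ∑ p : VIdx n, y (Sum.inr (Sum.inr p)) * y (Sum.inr (Sum.inr p)) := by
    have e1 : ∀ i : Fin n, ((a i + b i)/2)^2 =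
        y (Sum.inr (Sum.inr (⟨(i,i), le_rfl⟩ : VIdx n))) * y (Sum.inr (Sum.inr ⟨(i,i), le_rfl⟩)) := by
      intro i; rw [h2 i]; ring
    calc ∑ i, ((a i + b i)/2)^2
        = ∑ i, y (Sum.inr (Sum.inr ((fun i : Fin n => (⟨(i,i), le_rfl⟩ : VIdx n)) i)))
            * y (Sum.inr (Sum.inr ((fun i : Fin n => (⟨(i,i), le_rfl⟩ : VIdx n)) i))) :=
          Finset.sum_congr rfl (fun i _ => e1 i)
      _ = ∑ p ∈ Finset.univ.image (fun i : Fin n => (⟨(i,i), le_rfl⟩ : VIdx n)),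
            y (Sum.inr (Sum.inr p)) * y (Sum.inr (Sum.inr p)) := by
          rw [Finset.sum_image (by intro u _ v _ h; simpa [Subtype.ext_iff, Prod.ext_iff] using h)]
      _ ≤ ∑ p : VIdx n, y (Sum.inr (Sum.inr p)) * y (Sum.inr (Sum.inr p)) :=
          Finset.sum_le_sum_of_subset_of_nonneg (Finset.subset_univ _)
            (fun p _ _ => mul_self_nonneg _)
  have hq4 : ∑ i, ((a i + b i)/2)^2 = P/4 := by
    rw [hPdef, Finset.sum_div]
    exact Finset.sum_congr rfl fun i _ => by ring
  have hmid : ∑ i, y (Sum.inr (Sum.inl i)) * y (Sum.inr (Sum.inl i)) = D := by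
    rw [hDdef]; exact Finset.sum_congr rfl fun i _ => by rw [h1 i]; ring
  have hylow : (t + C)^2 + D + P/4 ≤ y ⬝ᵥ y := by
    rw [hyy, h0, hmid]
    have he : (t + ((∑ i, a i) + ∑ i, b i)) * (t + ((∑ i, a i) + ∑ i, b i)) = (t + C)^2 := by
      rw [hCsum]; ring
    rw [he]
    linarith [hdiag, hq4]
  -- the scalar inequality
  have hid : 4*N*(4*N+2)*((4*N+3)*((t+C)^2 + D + P/4) - (t^2 + (P+D)/2)) =
      4*N*((4*N+2)*t+(4*N+3)*C)^2 + 2*C^2 + (4*N+1)*(4*N+2)*(N*P - C^2)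
        + N*(4*N+2)*(16*N+10)*D := by ring
  have ht3 : 0 ≤ (4*N+1)*(4*N+2)*(N*P - C^2) :=
    mul_nonneg (by positivity) (by linarith)
  have ht4 : 0 ≤ N*(4*N+2)*(16*N+10)*D := mul_nonneg (by positivity) hD
  have hprod : 0 ≤ 4*N*(4*N+2)*((4*N+3)*((t+C)^2 + D + P/4) - (t^2 + (P+D)/2)) := by
    rw [hid]
    have t1 : 0 ≤ 4*N*((4*N+2)*t+(4*N+3)*C)^2 := by positivity
    have t2 : 0 ≤ 2*C^2 := by positivity
    linarith
  have hpos : (0:ℝ) < 4*N*(4*N+2) := by positivity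
  have hscalar : t^2 + (P+D)/2 ≤ (4*N+3)*((t+C)^2 + D + P/4) := by
    have := (mul_nonneg_iff_of_pos_left hpos).mp hprod
    linarith
  -- combine
  have h43 : (0:ℝ) ≤ 4*N+3 := by linarith
  calc x ⬝ᵥ x = t^2 + (P+D)/2 := by rw [hxx]; linarith [hPD]
    _ ≤ (4*N+3)*((t+C)^2 + D + P/4) := hscalar
    _ ≤ (4*N+3)*(y ⬝ᵥ y) := mul_le_mul_of_nonneg_left hylow h43

theorem stmt13 (n : ℕ) (hn : 1 ≤ n) (wmax : ℝ) (hwmax : 0 < wmax)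
    (W : Matrix (QIdx n) (QIdx n) ℝ) (hW : W.PosDef)
    (hup : (wmax • (1 : Matrix (QIdx n) (QIdx n) ℝ) - W).PosSemidef) :
    1 / (wmax * (4 * n + 3)) ≤ lambdaMin (fallbackA n * W⁻¹ * (fallbackA n)ᵀ) := by
  have hWiH : W⁻¹.IsHermitian := hW.inv.1
  have htr : (fallbackA n)ᵀ = (fallbackA n)ᴴ := by
    ext i j; simp [conjTranspose_apply]
  have hMH : (fallbackA n * W⁻¹ * (fallbackA n)ᵀ).IsHermitian := by
    rw [htr]
    exact isHermitian_mul_mul_conjTranspose _ hWiH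
  rw [lambdaMin, dif_pos hMH]
  apply le_ciInf
  intro i
  apply lambdaMinAux hMH ?_ i
  intro x
  have hform : x ⬝ᵥ ((fallbackA n * W⁻¹ * (fallbackA n)ᵀ) *ᵥ x) =
      ((fallbackA n)ᵀ *ᵥ x) ⬝ᵥ (W⁻¹ *ᵥ ((fallbackA n)ᵀ *ᵥ x)) := by
    rw [← mulVec_mulVec, ← mulVec_mulVec, dotProduct_mulVec x (fallbackA n),
      ← mulVec_transpose]
  have hy := invQuadAux hW hup ((fallbackA n)ᵀ *ᵥ x)
  have hq := fallbackQuadAux n hn x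
  rw [hform]
  have hN1 : (1:ℝ) ≤ (n:ℝ) := by exact_mod_cast hn
  have h43 : (0:ℝ) < 4*(n:ℝ)+3 := by linarith
  rw [div_mul_eq_mul_div, one_mul, div_le_iff₀ (by positivity)]
  have hmul := mul_le_mul_of_nonneg_left hy (le_of_lt h43)
  nlinarith [hq, hmul]
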